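/- Let $x, y \in \mathbb{R}$ with $0 \le x \le 1/2$ and $y \ge \sqrt{1-x^2}$. Suppose $(p_\xi)$ are nonnegative reals indexed by complex numbers $\xi = \xi_{m,n} = m(1-ix/y) + n(i/y)$ with $(m,n)$ ranging over integer pairs with $m > 0$ or ($m = 0$ and $n > 0$), with finite support, satisfying $\sum p_\xi = 1$ and $\sum \xi^2 p_\xi = 0$. Then $\sum |\xi|^2 p_\xi \ge 2/(y^2+x^2-x+1)$. -/

import Mathlib

lemma core_6 (x : ℝ) (m n : ℤ) (h : 0 < m ∨ (m = 0 ∧ 0 < n)) :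
    1 ≤ (x^2 - x + 1) * (m:ℝ)^2 + ((n:ℝ) - m*x)^2 - (1 - 2*x) * m * ((n:ℝ) - m*x) := by
  rcases h with hm | ⟨hm, hn⟩
  · rcases lt_or_ge m 2 with h2 | h2
    · have hm1 : m = 1 := by omega
      subst hm1
      have hnn : (0:ℝ) ≤ (n:ℝ) * ((n:ℝ) - 1) := by
        rcases le_or_gt n 0 with h | h
        · have : (n:ℝ) ≤ 0 := by exact_mod_cast h
          nlinarith
        · have : (1:ℝ) ≤ (n:ℝ) := by exact_mod_cast h
          nlinarith
      push_cast
      nlinarith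
    · have h2' : (2:ℝ) ≤ (m:ℝ) := by exact_mod_cast h2
      nlinarith [sq_nonneg ((n:ℝ) - m*x - (1 - 2*x)*m/2)]
  · subst hm
    have : (1:ℝ) ≤ (n:ℝ) := by exact_mod_cast hn
    push_cast
    nlinarith

lemma pointwise_6 (x y : ℝ) (hy : 0 < y) (hD : 0 < y^2 + x^2 - x + 1) (m n : ℤ)
    (h : 0 < m ∨ (m = 0 ∧ 0 < n)) :
    2 / (y^2 + x^2 - x + 1) ≤ ((m:ℝ)^2 + (((n:ℝ) - m*x)/y)^2)
      + ((1 - 2*y^2/(y^2 + x^2 - x + 1)) * ((m:ℝ)^2 - (((n:ℝ) - m*x)/y)^2)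
         - (y*(1 - 2*x)/(y^2 + x^2 - x + 1)) * (2*(m:ℝ)*(((n:ℝ) - m*x)/y))) := by
  have hF := core_6 x m n h
  rw [div_le_iff₀ hD]
  have hyne := hy.ne'
  have hDne := hD.ne'
  have hid : (((m:ℝ)^2 + (((n:ℝ) - m*x)/y)^2)
      + ((1 - 2*y^2/(y^2 + x^2 - x + 1)) * ((m:ℝ)^2 - (((n:ℝ) - m*x)/y)^2)
         - (y*(1 - 2*x)/(y^2 + x^2 - x + 1)) * (2*(m:ℝ)*(((n:ℝ) - m*x)/y))))
      * (y^2 + x^2 - x + 1)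
      = 2 * ((x^2 - x + 1) * (m:ℝ)^2 + ((n:ℝ) - m*x)^2 - (1 - 2*x) * m * ((n:ℝ) - m*x)) := by
    field_simp
    ring
  rw [hid]
  linarith

theorem stmt_6 (x y : ℝ) (hx0 : 0 ≤ x) (hx1 : x ≤ 1/2)
    (hy : Real.sqrt (1 - x^2) ≤ y)
    (ξ : ℤ → ℤ → ℂ)
    (hξ : ∀ m n : ℤ, ξ m n = (m : ℂ) * (1 - Complex.I * x / y) + (n : ℂ) * (Complex.I / y))
    (s : Finset (ℤ × ℤ)) (p : ℤ × ℤ → ℝ)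
    (hs : ∀ q ∈ s, 0 < q.1 ∨ (q.1 = 0 ∧ 0 < q.2))
    (hp : ∀ q ∈ s, 0 ≤ p q)
    (hsum : ∑ q ∈ s, p q = 1)
    (hconf : ∑ q ∈ s, (p q : ℂ) * (ξ q.1 q.2)^2 = 0) :
    2 / (y^2 + x^2 - x + 1) ≤ ∑ q ∈ s, p q * ‖ξ q.1 q.2‖ ^ 2 := by
  -- basic positivity facts
  have hx2 : 0 < 1 - x^2 := by nlinarith
  have hy0 : 0 < y := lt_of_lt_of_le (Real.sqrt_pos.mpr hx2) hy
  have hD : 0 < y^2 + x^2 - x + 1 := by nlinarith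
  have hyne : (y:ℂ) ≠ 0 := by exact_mod_cast hy0.ne'
  set a : ℝ := 1 - 2*y^2/(y^2 + x^2 - x + 1) with ha
  set b : ℝ := y*(1 - 2*x)/(y^2 + x^2 - x + 1) with hb
  -- rewrite ξ in rectangular form
  have hxi : ∀ m n : ℤ, ξ m n = ((m:ℝ) : ℂ) + ((((n:ℝ) - m*x)/y : ℝ) : ℂ) * Complex.I := by
    intro m n
    rw [hξ]
    push_cast
    field_simp
    ring
  have habs : ∀ m n : ℤ, ‖ξ m n‖ ^ 2 = (m:ℝ)^2 + (((n:ℝ) - m*x)/y)^2 := by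
    intro m n
    rw [hxi, Complex.sq_norm, Complex.normSq_add_mul_I]
  have hsq : ∀ m n : ℤ, (ξ m n)^2
      = ((((m:ℝ)^2 - (((n:ℝ) - m*x)/y)^2 : ℝ)) : ℂ)
        + (((2*(m:ℝ)*(((n:ℝ) - m*x)/y) : ℝ)) : ℂ) * Complex.I := by
    intro m n
    rw [hxi]
    push_cast
    ring_nf
    rw [Complex.I_sq]
    ring
  -- the vanishing linear functional
  have hre0 : ∑ q ∈ s, p q * ((ξ q.1 q.2)^2).re = 0 := by
    have := congrArg Complex.re hconf
    simpa [Complex.re_sum] using this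
  have him0 : ∑ q ∈ s, p q * ((ξ q.1 q.2)^2).im = 0 := by
    have := congrArg Complex.im hconf
    simpa [Complex.im_sum] using this
  have hzero : ∑ q ∈ s, p q * (a * ((ξ q.1 q.2)^2).re - b * ((ξ q.1 q.2)^2).im) = 0 := by
    have : ∑ q ∈ s, p q * (a * ((ξ q.1 q.2)^2).re - b * ((ξ q.1 q.2)^2).im)
        = a * (∑ q ∈ s, p q * ((ξ q.1 q.2)^2).re) - b * (∑ q ∈ s, p q * ((ξ q.1 q.2)^2).im) := by
      rw [Finset.mul_sum, Finset.mul_sum, ← Finset.sum_sub_distrib]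
      congr 1; ext q; ring
    rw [this, hre0, him0]
    ring
  -- pointwise bound
  have hpt : ∀ q ∈ s, p q * (2 / (y^2 + x^2 - x + 1))
      ≤ p q * (‖ξ q.1 q.2‖ ^ 2
          + (a * ((ξ q.1 q.2)^2).re - b * ((ξ q.1 q.2)^2).im)) := by
    intro q hq
    apply mul_le_mul_of_nonneg_left _ (hp q hq)
    have h1 := pointwise_6 x y hy0 hD q.1 q.2 (hs q hq)
    have hre : ((ξ q.1 q.2)^2).re = (q.1:ℝ)^2 - (((q.2:ℝ) - q.1*x)/y)^2 := by
      rw [hsq]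
      simp only [Complex.add_re, Complex.mul_I_re, Complex.ofReal_re, Complex.ofReal_im,
        neg_zero, add_zero]
    have him : ((ξ q.1 q.2)^2).im = 2*(q.1:ℝ)*(((q.2:ℝ) - q.1*x)/y) := by
      rw [hsq]
      simp only [Complex.add_im, Complex.mul_I_im, Complex.ofReal_re, Complex.ofReal_im,
        zero_add]
    rw [habs, hre, him]
    exact h1
  calc 2 / (y^2 + x^2 - x + 1)
      = ∑ q ∈ s, p q * (2 / (y^2 + x^2 - x + 1)) := by
        rw [← Finset.sum_mul, hsum, one_mul]
    _ ≤ ∑ q ∈ s, p q * (‖ξ q.1 q.2‖ ^ 2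
          + (a * ((ξ q.1 q.2)^2).re - b * ((ξ q.1 q.2)^2).im)) := Finset.sum_le_sum hpt
    _ = (∑ q ∈ s, p q * ‖ξ q.1 q.2‖ ^ 2)
        + ∑ q ∈ s, p q * (a * ((ξ q.1 q.2)^2).re - b * ((ξ q.1 q.2)^2).im) := by
        rw [← Finset.sum_add_distrib]
        congr 1; ext q; ring
    _ = ∑ q ∈ s, p q * ‖ξ q.1 q.2‖ ^ 2 := by rw [hzero, add_zero]
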